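/- arXiv:2402.03468 — 4 statements merged into one kernel-verified Lean document; each statement's English description precedes it below -/
import Mathlib

section
/- For every A ∈ ℂ^{n1×n2×N3}, the supremum of Re⟨B, A⟩ over all B ∈ ℂ^{n1×n2×N3} with tensor spectral norm ‖B‖ ≤ 1 equals the sum of all singular values of all frontal slices of A; that is, the dual norm of the tensor spectral norm is the tensor nuclear norm ‖A‖_* = Σ_{k=1}^{N3} Σ_i σ_i(A(:,:,k)). -/
namespace TC

open scoped BigOperators ComplexConjugate
open Matrix

/-- A third-order complex tensor. -/
abbrev Tensor (n1 n2 n3 : ℕ) := Fin n1 → Fin n2 → Fin n3 → ℂ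

/-- The `k`-th frontal slice of a tensor. -/
def slice {n1 n2 n3 : ℕ} (A : Tensor n1 n2 n3) (k : Fin n3) : Matrix (Fin n1) (Fin n2) ℂ :=
  Matrix.of fun i j => A i j k

/-- The natural tensor-tensor product: slice-wise matrix multiplication. -/
noncomputable def tprod {n1 n2 l n3 : ℕ} (A : Tensor n1 n2 n3) (B : Tensor n2 l n3) : Tensor n1 l n3 :=
  fun i j k => ∑ s, A i s k * B s j k

/-- Slice-wise conjugate transpose. -/
noncomputable def hconj {n1 n2 n3 : ℕ} (A : Tensor n1 n2 n3) : Tensor n2 n1 n3 :=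
  fun i j k => (starRingEnd ℂ) (A j i k)

/-- Mode-3 product: apply the matrix `T` to every mode-3 fiber. -/
noncomputable def mode3 {n1 n2 m n : ℕ} (T : Matrix (Fin m) (Fin n) ℂ) (A : Tensor n1 n2 n) :
    Tensor n1 n2 m :=
  fun i j k => ∑ s, T k s * A i j s

/-- Frobenius norm of a tensor. -/
noncomputable def frobNorm {n1 n2 n3 : ℕ} (A : Tensor n1 n2 n3) : ℝ :=
  Real.sqrt (∑ i, ∑ j, ∑ k, ‖A i j k‖ ^ 2)

/-- Entrywise maximum modulus of a tensor. -/
noncomputable def infNorm {n1 n2 n3 : ℕ} (A : Tensor n1 n2 n3) : ℝ :=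
  ⨆ i, ⨆ j, ⨆ k, ‖A i j k‖

/-- `‖A‖_{1↦2}`: largest Frobenius norm of a lateral slice (column). -/
noncomputable def norm1to2 {n1 n2 n3 : ℕ} (A : Tensor n1 n2 n3) : ℝ :=
  ⨆ j, Real.sqrt (∑ i, ∑ k, ‖A i j k‖ ^ 2)

/-- `‖A‖_{2↦∞}`: largest Frobenius norm of a horizontal slice (row). -/
noncomputable def norm2toInf {n1 n2 n3 : ℕ} (A : Tensor n1 n2 n3) : ℝ :=
  ⨆ i, Real.sqrt (∑ j, ∑ k, ‖A i j k‖ ^ 2)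

/-- `‖A‖_{∞,2}`. -/
noncomputable def normInf2 {n1 n2 n3 : ℕ} (A : Tensor n1 n2 n3) : ℝ :=
  max (norm1to2 A) (norm2toInf A)

/-- Singular values of a complex matrix: square roots of the eigenvalues of `Mᴴ * M`. -/
noncomputable def singVals {m n : ℕ} (M : Matrix (Fin m) (Fin n) ℂ) : Fin n → ℝ :=
  fun i => Real.sqrt ((Matrix.isHermitian_conjTranspose_mul_self M).eigenvalues i)

/-- Matrix spectral norm: the largest singular value. -/
noncomputable def specNormMat {m n : ℕ} (M : Matrix (Fin m) (Fin n) ℂ) : ℝ :=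
  ⨆ i, singVals M i

/-- Matrix nuclear norm: sum of the singular values. -/
noncomputable def nucNormMat {m n : ℕ} (M : Matrix (Fin m) (Fin n) ℂ) : ℝ :=
  ∑ i, singVals M i

/-- Tensor spectral norm: the maximum singular value over all frontal slices. -/
noncomputable def tSpecNorm {n1 n2 n3 : ℕ} (A : Tensor n1 n2 n3) : ℝ :=
  ⨆ k, specNormMat (slice A k)

/-- Tensor nuclear norm: the sum of all singular values of all frontal slices. -/
noncomputable def tNucNorm {n1 n2 n3 : ℕ} (A : Tensor n1 n2 n3) : ℝ :=
  ∑ k, nucNormMat (slice A k)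

/-- Smallest singular value. -/
noncomputable def sigmaMin {m n : ℕ} (M : Matrix (Fin m) (Fin n) ℂ) : ℝ :=
  ⨅ i, singVals M i

/-- Condition number `κ(T) = σ_max(T) / σ_min(T)`. -/
noncomputable def kappa {m n : ℕ} (M : Matrix (Fin m) (Fin n) ℂ) : ℝ :=
  specNormMat M / sigmaMin M

/-- Entrywise maximum modulus of a matrix. -/
noncomputable def matInfNorm {m n : ℕ} (M : Matrix (Fin m) (Fin n) ℂ) : ℝ :=
  ⨆ i, ⨆ j, ‖M i j‖

/-- `‖M‖_{1↦2}`: largest `ℓ2` norm of the columns of `M`. -/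
noncomputable def col2Norm {m n : ℕ} (M : Matrix (Fin m) (Fin n) ℂ) : ℝ :=
  ⨆ j, Real.sqrt (∑ i, ‖M i j‖ ^ 2)

/-- Moore–Penrose pseudo-inverse of a matrix of full column rank. -/
noncomputable def pinv {N3 n3 : ℕ} (T : Matrix (Fin N3) (Fin n3) ℂ) :
    Matrix (Fin n3) (Fin N3) ℂ :=
  (Tᴴ * T)⁻¹ * Tᴴ

/-- `ρ(T) = N3 · max(‖T‖_∞², ‖T†‖_∞²)`. -/
noncomputable def rho {N3 n3 : ℕ} (T : Matrix (Fin N3) (Fin n3) ℂ) : ℝ :=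
  (N3 : ℝ) * max (matInfNorm T ^ 2) (matInfNorm (pinv T) ^ 2)

/-- `T` has full column rank. -/
def FullColRank {N3 n3 : ℕ} (T : Matrix (Fin N3) (Fin n3) ℂ) : Prop := T.rank = n3

/-- The sampling operator `S_Ω`. -/
noncomputable def sampleOp {n1 n2 n3 : ℕ} (Ω : Finset (Fin n1 × Fin n2 × Fin n3)) (A : Tensor n1 n2 n3) :
    Tensor n1 n2 n3 :=
  fun i j k => if (i, j, k) ∈ Ω then A i j k else 0

open Classical in
/-- The probability, under Bernoulli(p) sampling of each index independently, that the
random sampled index set satisfies the event `E`. -/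
noncomputable def berProb {ι : Type*} [Fintype ι] (p : ℝ) (E : Finset ι → Prop) : ℝ :=
  ∑ Ω ∈ (Finset.univ : Finset ι).powerset,
    if E Ω then p ^ Ω.card * (1 - p) ^ (Fintype.card ι - Ω.card) else 0

/-- Skinny natural t-SVD of tubal rank `r`: `A = U ⋆ S ⋆ Vᴴ` with slice-wise orthonormal
columns for `U`, `V`, slice-wise diagonal `S` with nonnegative (real) diagonal entries,
and no zero tube on the diagonal of `S` (so `r` is exactly the tubal rank of `A`). -/
structure IsSkinnyTSVD {n1 n2 n3 : ℕ} (A : Tensor n1 n2 n3) (r : ℕ)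
    (U : Tensor n1 r n3) (S : Tensor r r n3) (V : Tensor n2 r n3) : Prop where
  factor : A = tprod U (tprod S (hconj V))
  U_orth : ∀ k : Fin n3, (slice U k)ᴴ * slice U k = 1
  V_orth : ∀ k : Fin n3, (slice V k)ᴴ * slice V k = 1
  S_diag : ∀ (k : Fin n3) (i j : Fin r), i ≠ j → S i j k = 0
  S_real_nonneg : ∀ (k : Fin n3) (i : Fin r), (S i i k).im = 0 ∧ 0 ≤ (S i i k).re
  tubes_ne : ∀ i : Fin r, ∃ k : Fin n3, S i i k ≠ 0

/-- Full natural t-SVD: `A = U ⋆ S ⋆ Vᴴ` with slice-wise unitary `U`, `V` and slice-wise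
diagonal `S` with nonnegative (real) diagonal entries. -/
structure IsFullTSVD {n1 n2 n3 : ℕ} (A : Tensor n1 n2 n3)
    (U : Tensor n1 n1 n3) (S : Tensor n1 n2 n3) (V : Tensor n2 n2 n3) : Prop where
  factor : A = tprod U (tprod S (hconj V))
  U_unitary : ∀ k : Fin n3, (slice U k)ᴴ * slice U k = 1
  V_unitary : ∀ k : Fin n3, (slice V k)ᴴ * slice V k = 1
  S_diag : ∀ (k : Fin n3) (i : Fin n1) (j : Fin n2), (i : ℕ) ≠ (j : ℕ) → S i j k = 0
  S_real_nonneg : ∀ (k : Fin n3) (i : Fin n1) (j : Fin n2), (i : ℕ) = (j : ℕ) →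
    (S i j k).im = 0 ∧ 0 ≤ (S i j k).re

/-- `(S - τ)₊`: replace every diagonal entry `s` of each frontal slice by `max (s - τ) 0`. -/
noncomputable def shrink {n1 n2 n3 : ℕ} (τ : ℝ) (S : Tensor n1 n2 n3) : Tensor n1 n2 n3 :=
  fun i j k => if (i : ℕ) = (j : ℕ) then ((max ((S i j k).re - τ) 0 : ℝ) : ℂ) else S i j k

/-- The projection `P_S` onto the tangent subspace spanned by the singular tensors. -/
noncomputable def PS {n1 n2 n3 r : ℕ} (U : Tensor n1 r n3) (V : Tensor n2 r n3) (Z : Tensor n1 n2 n3) :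
    Tensor n1 n2 n3 :=
  tprod U (tprod (hconj U) Z) + tprod Z (tprod V (hconj V))
    - tprod U (tprod (hconj U) (tprod Z (tprod V (hconj V))))

/-- The complementary projection `P_{S⊥}`. -/
noncomputable def PSperp {n1 n2 n3 r : ℕ} (U : Tensor n1 r n3) (V : Tensor n2 r n3) (Z : Tensor n1 n2 n3) :
    Tensor n1 n2 n3 :=
  Z - PS U V Z

/-- Operator norm of a map between tensor spaces, with respect to Frobenius norms. -/
noncomputable def opNormT {a b c d e f : ℕ} (L : Tensor a b c → Tensor d e f) : ℝ :=
  sSup {x : ℝ | ∃ Z : Tensor a b c, frobNorm Z ≤ 1 ∧ x = frobNorm (L Z)}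

/-- Tensor column basis `ξ_i ∈ ℂ^{n×1×m}`. -/
noncomputable def xiB (n m : ℕ) (i : Fin n) : Tensor n 1 m := fun a _ _ => if a = i then 1 else 0

/-- Tensor frontal-slice basis `ζ_k ∈ ℂ^{1×1×n}`. -/
noncomputable def zetaB (n : ℕ) (k : Fin n) : Tensor 1 1 n := fun _ _ c => if c = k then 1 else 0

/-- Standard inner product of tensors. -/
noncomputable def tinner {n1 n2 n3 : ℕ} (A B : Tensor n1 n2 n3) : ℂ :=
  ∑ i, ∑ j, ∑ k, (starRingEnd ℂ) (A i j k) * B i j k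

/-- Standard basis tensor `e_{ijk}`. -/
noncomputable def eBasis (n1 n2 n3 : ℕ) (i : Fin n1) (j : Fin n2) (k : Fin n3) : Tensor n1 n2 n3 :=
  fun a b c => if a = i ∧ b = j ∧ c = k then 1 else 0

/-- `X` is the unique optimal solution of:
minimize `‖T(X̂)‖_*` subject to `S_Ω(X̂) = S_Ω(X)`. -/
def UniqueSolution {n1 n2 n3 N3 : ℕ} (T : Matrix (Fin N3) (Fin n3) ℂ) (X : Tensor n1 n2 n3)
    (Ω : Finset (Fin n1 × Fin n2 × Fin n3)) : Prop :=
  ∀ Y : Tensor n1 n2 n3, sampleOp Ω Y = sampleOp Ω X → Y ≠ X →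
    tNucNorm (mode3 T X) < tNucNorm (mode3 T Y)

/-- The tensor incoherence conditions with parameters `μ, ν`. -/
structure Incoherent {n1 n2 n3 N3 r : ℕ} (T : Matrix (Fin N3) (Fin n3) ℂ)
    (U : Tensor n1 r N3) (V : Tensor n2 r N3) (μ ν : ℝ) : Prop where
  hU : ∀ i : Fin n1,
    frobNorm (tprod (hconj U) (xiB n1 N3 i)) ≤ Real.sqrt (μ * r * N3 / n1)
  hV : ∀ j : Fin n2,
    frobNorm (tprod (hconj V) (xiB n2 N3 j)) ≤ Real.sqrt (μ * r * N3 / n2)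
  hUT : ∀ (i : Fin n1) (k : Fin n3),
    frobNorm (tprod (tprod (hconj U) (xiB n1 N3 i)) (mode3 T (zetaB n3 k)))
      ≤ Real.sqrt (ν * r / n1) * col2Norm T
  hVT : ∀ (j : Fin n2) (k : Fin n3),
    frobNorm (tprod (tprod (hconj V) (xiB n2 N3 j)) (mode3 T (zetaB n3 k)))
      ≤ Real.sqrt (ν * r / n2) * col2Norm T

/-- The operator `P_S T R_Ω T† P_S − P_S T T† P_S` on `ℂ^{n1×n2×N3}`, `R_Ω = p⁻¹ S_Ω`. -/
noncomputable def isoOp {n1 n2 n3 N3 r : ℕ} (T : Matrix (Fin N3) (Fin n3) ℂ)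
    (U : Tensor n1 r N3) (V : Tensor n2 r N3)
    (Ω : Finset (Fin n1 × Fin n2 × Fin n3)) (p : ℝ) :
    Tensor n1 n2 N3 → Tensor n1 n2 N3 :=
  fun Z =>
    PS U V (mode3 T ((p⁻¹ : ℝ) • sampleOp Ω (mode3 (pinv T) (PS U V Z))))
      - PS U V (mode3 T (mode3 (pinv T) (PS U V Z)))

/-- The dual-certificate conditions (a) `(T T† − T S_Ω T†)ᴴ Y = 0` (the adjoint being
`T̃ Tᴴ − T̃ S_Ω Tᴴ` with `T̃ = (T†)ᴴ`), (b) `‖P_S(Y) − U ⋆ Vᴴ‖_F ≤ p/(8 κ(T))`, and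
(c) `‖P_{S⊥}(Y)‖ ≤ 1/2` in tensor spectral norm. -/
def DualCert {n1 n2 n3 N3 r : ℕ} (T : Matrix (Fin N3) (Fin n3) ℂ)
    (U : Tensor n1 r N3) (V : Tensor n2 r N3)
    (Ω : Finset (Fin n1 × Fin n2 × Fin n3)) (p : ℝ) (Y : Tensor n1 n2 N3) : Prop :=
  (mode3 (pinv T)ᴴ (mode3 Tᴴ Y) - mode3 (pinv T)ᴴ (sampleOp Ω (mode3 Tᴴ Y)) = 0) ∧
  frobNorm (PS U V Y - tprod U (hconj V)) ≤ p / (8 * kappa T) ∧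
  tSpecNorm (PSperp U V Y) ≤ 1 / 2

lemma quad_diag_re {n : ℕ} (d : Fin n → ℝ) (w : Fin n → ℂ) :
    (star w ⬝ᵥ (Matrix.diagonal (fun j => (d j : ℂ))) *ᵥ w).re
      = ∑ j, d j * ‖w j‖ ^ 2 := by
  rw [dotProduct, Complex.re_sum]
  refine Finset.sum_congr rfl fun j _ => ?_
  simp [Matrix.mulVec_diagonal, Pi.star_apply, Complex.sq_norm, Complex.normSq_apply,
    Complex.mul_re, Complex.mul_im]
  ring

lemma dot_self_re {n : ℕ} (w : Fin n → ℂ) :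
    (star w ⬝ᵥ w).re = ∑ j, ‖w j‖ ^ 2 := by
  rw [dotProduct, Complex.re_sum]
  refine Finset.sum_congr rfl fun j _ => ?_
  simp [Pi.star_apply, Complex.sq_norm, Complex.normSq_apply, Complex.mul_re]

lemma cs {m : ℕ} (x y : Fin m → ℂ) :
    ‖star x ⬝ᵥ y‖ ≤ Real.sqrt (∑ a, ‖x a‖ ^ 2) * Real.sqrt (∑ a, ‖y a‖ ^ 2) := by
  have h := norm_inner_le_norm (𝕜 := ℂ)
    ((WithLp.equiv 2 (Fin m → ℂ)).symm x) ((WithLp.equiv 2 (Fin m → ℂ)).symm y)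
  rw [EuclideanSpace.inner_eq_star_dotProduct, dotProduct_comm] at h
  simpa [EuclideanSpace.norm_eq] using h

lemma quad_conj {n : ℕ} (V H : Matrix (Fin n) (Fin n) ℂ) (v : Fin n → ℂ) :
    star v ⬝ᵥ (V * H * Vᴴ) *ᵥ v = star (Vᴴ *ᵥ v) ⬝ᵥ H *ᵥ (Vᴴ *ᵥ v) := by
  have h1 : star (Vᴴ *ᵥ v) = star v ᵥ* V := by
    simpa using Matrix.star_mulVec Vᴴ v
  rw [← Matrix.mulVec_mulVec, ← Matrix.mulVec_mulVec, Matrix.dotProduct_mulVec, h1]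

lemma eig_le_one {n : ℕ} {H : Matrix (Fin n) (Fin n) ℂ} (hH : H.IsHermitian)
    (h : ∀ v : Fin n → ℂ, (star v ⬝ᵥ H *ᵥ v).re ≤ (star v ⬝ᵥ v).re) (i : Fin n) :
    hH.eigenvalues i ≤ 1 := by
  have hv1 : ‖hH.eigenvectorBasis i‖ = 1 := hH.eigenvectorBasis.orthonormal.1 i
  have hvv : (star (⇑(hH.eigenvectorBasis i)) ⬝ᵥ ⇑(hH.eigenvectorBasis i)) = (1 : ℂ) := by
    have := @inner_self_eq_norm_sq_to_K ℂ _ _ _ _ (hH.eigenvectorBasis i)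
    rw [EuclideanSpace.inner_eq_star_dotProduct, dotProduct_comm] at this
    simpa [hv1] using this
  rw [hH.eigenvalues_eq i]
  simp only [RCLike.re_to_complex]
  calc (star (⇑(hH.eigenvectorBasis i)) ⬝ᵥ H *ᵥ ⇑(hH.eigenvectorBasis i)).re
      ≤ (star (⇑(hH.eigenvectorBasis i)) ⬝ᵥ ⇑(hH.eigenvectorBasis i)).re := h _
    _ = 1 := by rw [hvv]; simp

lemma diag_entry_re {m p : ℕ} (P : Matrix (Fin m) (Fin p) ℂ) (i : Fin p) :
    ((Pᴴ * P) i i).re = ∑ a, ‖P a i‖ ^ 2 := by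
  rw [Matrix.mul_apply, Complex.re_sum]
  refine Finset.sum_congr rfl fun a _ => ?_
  simp [Matrix.conjTranspose_apply, Complex.sq_norm, Complex.normSq_apply, Complex.mul_re]

lemma diag_sandwich_re {n p : ℕ} (d : Fin n → ℝ) (C : Matrix (Fin n) (Fin p) ℂ) (i : Fin p) :
    ((Cᴴ * Matrix.diagonal (fun j => (d j : ℂ)) * C) i i).re = ∑ j, d j * ‖C j i‖ ^ 2 := by
  rw [Matrix.mul_apply, Complex.re_sum]
  refine Finset.sum_congr rfl fun j _ => ?_
  rw [Matrix.mul_apply]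
  simp [Matrix.diagonal, Matrix.conjTranspose_apply, Finset.sum_ite_eq, Finset.mul_sum]
  simp [Complex.sq_norm, Complex.normSq_apply, Complex.mul_re, Complex.mul_im]
  ring

lemma singVals_nonneg {m n : ℕ} (M : Matrix (Fin m) (Fin n) ℂ) (i : Fin n) :
    0 ≤ singVals M i := Real.sqrt_nonneg _

lemma singVals_le_spec {m n : ℕ} (M : Matrix (Fin m) (Fin n) ℂ) (i : Fin n) :
    singVals M i ≤ specNormMat M :=
  le_ciSup (Set.Finite.bddAbove (Set.finite_range _)) i

lemma trace_re_le_nucNorm {m n : ℕ} (M B : Matrix (Fin m) (Fin n) ℂ)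
    (hB : specNormMat B ≤ 1) :
    (Matrix.trace (Bᴴ * M)).re ≤ nucNormMat M := by
  classical
  have hM := Matrix.isHermitian_conjTranspose_mul_self M
  have hB' := Matrix.isHermitian_conjTranspose_mul_self B
  set V : Matrix (Fin n) (Fin n) ℂ := ↑(hM.eigenvectorUnitary) with hVdef
  set W : Matrix (Fin n) (Fin n) ℂ := ↑(hB'.eigenvectorUnitary) with hWdef
  have hVV : V * Vᴴ = 1 := by
    simpa [star_eq_conjTranspose] using Matrix.mem_unitaryGroup_iff.mp hM.eigenvectorUnitary.2
  have hV'V : Vᴴ * V = 1 := by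
    simpa [star_eq_conjTranspose] using Matrix.mem_unitaryGroup_iff'.mp hM.eigenvectorUnitary.2
  have hWW : W * Wᴴ = 1 := by
    simpa [star_eq_conjTranspose] using Matrix.mem_unitaryGroup_iff.mp hB'.eigenvectorUnitary.2
  have hdiagM : Vᴴ * (Mᴴ * M) * V
      = Matrix.diagonal (fun j => ((hM.eigenvalues j : ℝ) : ℂ)) := by
    have := hM.conjStarAlgAut_star_eigenvectorUnitary
    simpa [star_eq_conjTranspose, Function.comp_def] using this
  have hBBspec : Bᴴ * B
      = W * Matrix.diagonal (fun j => ((hB'.eigenvalues j : ℝ) : ℂ)) * Wᴴ := by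
    have := hB'.spectral_theorem
    simpa [star_eq_conjTranspose, Function.comp_def] using this
  have htr : Matrix.trace (Bᴴ * M) = Matrix.trace ((B * V)ᴴ * (M * V)) := by
    have h1 : (B * V)ᴴ * (M * V) = Vᴴ * ((Bᴴ * M) * V) := by
      rw [Matrix.conjTranspose_mul]
      simp [Matrix.mul_assoc]
    have h2 : Bᴴ * M * V * Vᴴ = Bᴴ * M := by
      rw [Matrix.mul_assoc, hVV, Matrix.mul_one]
    rw [h1, Matrix.trace_mul_comm Vᴴ, h2]
  rw [htr, Matrix.trace, Complex.re_sum]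
  have key : ∀ i : Fin n, (((B * V)ᴴ * (M * V)).diag i).re ≤ singVals M i := by
    intro i
    have hentry : ((B * V)ᴴ * (M * V)).diag i
        = star (fun a => (B * V) a i) ⬝ᵥ (fun a => (M * V) a i) := by
      simp only [Matrix.diag, Matrix.mul_apply, dotProduct, Matrix.conjTranspose_apply,
        Pi.star_apply, RCLike.star_def]
    have hMV : ∑ a, ‖(M * V) a i‖ ^ 2 = hM.eigenvalues i := by
      have h1 := diag_entry_re (M * V) i
      have h2 : (M * V)ᴴ * (M * V) = Vᴴ * (Mᴴ * M) * V := by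
        rw [Matrix.conjTranspose_mul]; simp [Matrix.mul_assoc]
      rw [h2, hdiagM] at h1
      simpa [Matrix.diagonal_apply_eq] using h1.symm
    have hBV : ∑ a, ‖(B * V) a i‖ ^ 2 ≤ 1 := by
      have h1 := diag_entry_re (B * V) i
      have h2 : (B * V)ᴴ * (B * V) = (Wᴴ * V)ᴴ
          * Matrix.diagonal (fun j => ((hB'.eigenvalues j : ℝ) : ℂ)) * (Wᴴ * V) := by
        have h3 : (B * V)ᴴ * (B * V) = Vᴴ * (Bᴴ * B) * V := by
          rw [Matrix.conjTranspose_mul]; simp [Matrix.mul_assoc]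
        have h4 := congrArg (fun X => Vᴴ * X * V) hBBspec
        refine h3.trans (h4.trans ?_)
        rw [Matrix.conjTranspose_mul, Matrix.conjTranspose_conjTranspose]
        simp [Matrix.mul_assoc]
      have h2' := congrArg (fun X : Matrix (Fin n) (Fin n) ℂ => (X i i).re) h2
      have h1' : ∑ a, ‖(B * V) a i‖ ^ 2
          = ∑ j, hB'.eigenvalues j * ‖(Wᴴ * V) j i‖ ^ 2 :=
        (h1.symm).trans (h2'.trans (diag_sandwich_re _ _ i))
      rw [h1']
      have hlam : ∀ j, hB'.eigenvalues j ≤ 1 := by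
        intro j
        have h3 : singVals B j ≤ 1 := le_trans (singVals_le_spec B j) hB
        have h4 : singVals B j ^ 2 = hB'.eigenvalues j :=
          Real.sq_sqrt (Matrix.eigenvalues_conjTranspose_mul_self_nonneg B j)
        calc hB'.eigenvalues j = singVals B j ^ 2 := h4.symm
          _ ≤ 1 ^ 2 := by
              exact pow_le_pow_left₀ (singVals_nonneg B j) h3 2
          _ = 1 := one_pow 2
      calc ∑ j, hB'.eigenvalues j * ‖(Wᴴ * V) j i‖ ^ 2
          ≤ ∑ j, 1 * ‖(Wᴴ * V) j i‖ ^ 2 := by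
            refine Finset.sum_le_sum fun j _ => ?_
            exact mul_le_mul_of_nonneg_right (hlam j) (by positivity)
        _ = ((( Wᴴ * V)ᴴ * (Wᴴ * V)) i i).re := by
            simp only [one_mul]; exact (diag_entry_re (Wᴴ * V) i).symm
        _ = 1 := by
            have h5 : (Wᴴ * V)ᴴ * (Wᴴ * V) = Vᴴ * (W * Wᴴ) * V := by
              rw [Matrix.conjTranspose_mul]
              simp [Matrix.mul_assoc, Matrix.conjTranspose_conjTranspose]
            rw [h5, hWW, Matrix.mul_one, hV'V]
            simp
    calc (((B * V)ᴴ * (M * V)).diag i).re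
        ≤ ‖((B * V)ᴴ * (M * V)).diag i‖ := Complex.re_le_norm _
      _ ≤ Real.sqrt (∑ a, ‖(B * V) a i‖ ^ 2) * Real.sqrt (∑ a, ‖(M * V) a i‖ ^ 2) := by
          rw [hentry]; exact cs _ _
      _ ≤ 1 * Real.sqrt (∑ a, ‖(M * V) a i‖ ^ 2) := by
          refine mul_le_mul_of_nonneg_right ?_ (Real.sqrt_nonneg _)
          exact Real.sqrt_le_one.mpr hBV
      _ = singVals M i := by rw [one_mul, hMV]; rfl
  exact Finset.sum_le_sum fun i _ => key i

lemma exists_trace_eq_nucNorm {m n : ℕ} (M : Matrix (Fin m) (Fin n) ℂ) :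
    ∃ B : Matrix (Fin m) (Fin n) ℂ, specNormMat B ≤ 1 ∧
      (Matrix.trace (Bᴴ * M)).re = nucNormMat M := by
  classical
  have hM := Matrix.isHermitian_conjTranspose_mul_self M
  set V : Matrix (Fin n) (Fin n) ℂ := ↑(hM.eigenvectorUnitary) with hVdef
  have hVV : V * Vᴴ = 1 := by
    simpa [star_eq_conjTranspose] using Matrix.mem_unitaryGroup_iff.mp hM.eigenvectorUnitary.2
  have hV'V : Vᴴ * V = 1 := by
    simpa [star_eq_conjTranspose] using Matrix.mem_unitaryGroup_iff'.mp hM.eigenvectorUnitary.2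
  set ev : Fin n → ℝ := hM.eigenvalues with hevdef
  have hev0 : ∀ j, 0 ≤ ev j := fun j => Matrix.eigenvalues_conjTranspose_mul_self_nonneg M j
  set e : Fin n → ℝ := fun j => if ev j = 0 then 0 else (Real.sqrt (ev j))⁻¹ with hedef
  set g : Fin n → ℝ := fun j => if ev j = 0 then 0 else 1 with hgdef
  set De : Matrix (Fin n) (Fin n) ℂ := Matrix.diagonal (fun j => ((e j : ℝ) : ℂ)) with hDedef
  set Dev : Matrix (Fin n) (Fin n) ℂ := Matrix.diagonal (fun j => ((ev j : ℝ) : ℂ)) with hDevdef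
  set Dg : Matrix (Fin n) (Fin n) ℂ := Matrix.diagonal (fun j => ((g j : ℝ) : ℂ)) with hDgdef
  have hMM : Mᴴ * M = V * Dev * Vᴴ := by
    have := hM.spectral_theorem
    simpa [star_eq_conjTranspose, Function.comp_def] using this
  set P : Matrix (Fin n) (Fin n) ℂ := V * De * Vᴴ with hPdef
  have hP : Pᴴ = P := by
    rw [hPdef, Matrix.conjTranspose_mul, Matrix.conjTranspose_mul,
      Matrix.diagonal_conjTranspose, Matrix.conjTranspose_conjTranspose]
    have : star (fun j => ((e j : ℝ) : ℂ)) = fun j => ((e j : ℝ) : ℂ) := by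
      funext j; simp [Pi.star_apply, Complex.conj_ofReal]
    rw [this]
    simp [Matrix.mul_assoc]
    rfl
  have h3 : ∀ X Y : Matrix (Fin n) (Fin n) ℂ,
      (V * X * Vᴴ) * (V * Y * Vᴴ) = V * (X * Y) * Vᴴ := by
    intro X Y
    calc (V * X * Vᴴ) * (V * Y * Vᴴ) = V * X * (Vᴴ * V) * (Y * Vᴴ) := by
          simp [Matrix.mul_assoc]
      _ = V * (X * Y) * Vᴴ := by rw [hV'V]; simp [Matrix.mul_assoc]
  set B : Matrix (Fin m) (Fin n) ℂ := M * P with hBdef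
  have hgval : ∀ j : Fin n, ((e j : ℝ) : ℂ) * ((ev j : ℝ) : ℂ) * ((e j : ℝ) : ℂ)
      = ((g j : ℝ) : ℂ) := by
    intro j
    by_cases h : ev j = 0
    · simp [hedef, hgdef, h]
    · have hpos : 0 < ev j := lt_of_le_of_ne (hev0 j) (Ne.symm h)
      have hs : Real.sqrt (ev j) * Real.sqrt (ev j) = ev j := Real.mul_self_sqrt (hev0 j)
      have hsne : Real.sqrt (ev j) ≠ 0 := ne_of_gt (Real.sqrt_pos.mpr hpos)
      simp only [hedef, hgdef, if_neg h]
      push_cast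
      field_simp
      rw [← Complex.ofReal_pow, Real.sq_sqrt (hev0 j), div_self (Complex.ofReal_ne_zero.mpr h)]
  have hBB : Bᴴ * B = V * Dg * Vᴴ := by
    have h1 : Bᴴ * B = P * (Mᴴ * M) * P := by
      rw [hBdef, Matrix.conjTranspose_mul, hP]
      simp [Matrix.mul_assoc]
    have hfun : Matrix.diagonal
        (fun i => ((e i : ℝ) : ℂ) * ((ev i : ℝ) : ℂ) * ((e i : ℝ) : ℂ)) = Dg := by
      rw [hDgdef]
      have hff : (fun i => ((e i : ℝ) : ℂ) * ((ev i : ℝ) : ℂ) * ((e i : ℝ) : ℂ))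
          = fun j => ((g j : ℝ) : ℂ) := funext hgval
      rw [hff]
    rw [h1, hMM, hPdef, h3, h3, Matrix.diagonal_mul_diagonal, Matrix.diagonal_mul_diagonal,
      hfun]
  refine ⟨B, ?_, ?_⟩
  · have hBisH := Matrix.isHermitian_conjTranspose_mul_self B
    have hquad : ∀ v : Fin n → ℂ, (star v ⬝ᵥ (Bᴴ * B) *ᵥ v).re ≤ (star v ⬝ᵥ v).re := by
      intro v
      have e1 : star v ⬝ᵥ (Bᴴ * B) *ᵥ v = star (Vᴴ *ᵥ v) ⬝ᵥ Dg *ᵥ (Vᴴ *ᵥ v) := by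
        rw [hBB]; exact quad_conj V Dg v
      have e2 : star v ⬝ᵥ v = star (Vᴴ *ᵥ v) ⬝ᵥ (Vᴴ *ᵥ v) := by
        have h := quad_conj V 1 v
        rw [Matrix.mul_one, hVV] at h
        simpa using h
      rw [e1, e2, hDgdef, quad_diag_re, dot_self_re]
      refine Finset.sum_le_sum fun j _ => ?_
      have hg1 : g j ≤ 1 := by by_cases h : ev j = 0 <;> simp [hgdef, h]
      have := sq_nonneg ‖(Vᴴ *ᵥ v) j‖
      nlinarith
    refine Real.iSup_le (fun i => ?_) zero_le_one
    have hle := eig_le_one hBisH hquad i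
    calc singVals B i = Real.sqrt (hBisH.eigenvalues i) := rfl
      _ ≤ Real.sqrt 1 := Real.sqrt_le_sqrt hle
      _ = 1 := Real.sqrt_one
  · have h1 : Bᴴ * M = V * (De * Dev) * Vᴴ := by
      rw [hBdef, Matrix.conjTranspose_mul, hP]
      have h2 : P * Mᴴ * M = P * (Mᴴ * M) := by simp [Matrix.mul_assoc]
      rw [h2, hMM, hPdef, h3]
    rw [h1, Matrix.trace_mul_cycle, hV'V, Matrix.one_mul, Matrix.diagonal_mul_diagonal,
      Matrix.trace_diagonal]
    rw [Complex.re_sum]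
    unfold nucNormMat
    refine Finset.sum_congr rfl fun j _ => ?_
    by_cases h : ev j = 0
    · simp [hedef, singVals, ← hevdef, h]
    · have hs : Real.sqrt (ev j) * Real.sqrt (ev j) = ev j := Real.mul_self_sqrt (hev0 j)
      have hpos : 0 < ev j := lt_of_le_of_ne (hev0 j) (Ne.symm h)
      have hsne : Real.sqrt (ev j) ≠ 0 := ne_of_gt (Real.sqrt_pos.mpr hpos)
      have : ((e j : ℝ) : ℂ) * ((ev j : ℝ) : ℂ) = ((Real.sqrt (ev j) : ℝ) : ℂ) := by
        simp only [hedef, if_neg h]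
        push_cast
        field_simp
        rw [div_eq_iff (Complex.ofReal_ne_zero.mpr hsne), ← Complex.ofReal_mul, hs]
      rw [this]
      simp [singVals, ← hevdef]

lemma tinner_eq_sum_trace {n1 n2 N3 : ℕ} (B A : Tensor n1 n2 N3) :
    tinner B A = ∑ k, Matrix.trace ((slice B k)ᴴ * slice A k) := by
  unfold tinner
  have hrhs : ∀ k : Fin N3, Matrix.trace ((slice B k)ᴴ * slice A k)
      = ∑ j, ∑ i, (starRingEnd ℂ) (B i j k) * A i j k := by
    intro k
    rw [Matrix.trace]
    refine Finset.sum_congr rfl fun j _ => ?_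
    rw [Matrix.diag, Matrix.mul_apply]
    refine Finset.sum_congr rfl fun i _ => ?_
    simp [slice, Matrix.conjTranspose_apply]
  rw [Finset.sum_congr rfl fun k _ => hrhs k]
  calc (∑ i, ∑ j, ∑ k, (starRingEnd ℂ) (B i j k) * A i j k)
      = ∑ i, ∑ k, ∑ j, (starRingEnd ℂ) (B i j k) * A i j k :=
        Finset.sum_congr rfl fun i _ =>
          Finset.sum_comm (f := fun j k => (starRingEnd ℂ) (B i j k) * A i j k)
    _ = ∑ k, ∑ i, ∑ j, (starRingEnd ℂ) (B i j k) * A i j k :=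
        Finset.sum_comm (f := fun i k => ∑ j, (starRingEnd ℂ) (B i j k) * A i j k)
    _ = ∑ k, ∑ j, ∑ i, (starRingEnd ℂ) (B i j k) * A i j k :=
        Finset.sum_congr rfl fun k _ =>
          Finset.sum_comm (f := fun i j => (starRingEnd ℂ) (B i j k) * A i j k)

/-- **The dual norm of the tensor spectral norm is the tensor nuclear norm.** -/
theorem dual_of_spectral_is_nuclear {n1 n2 N3 : ℕ} (A : Tensor n1 n2 N3) :
    sSup {x : ℝ | ∃ B : Tensor n1 n2 N3, tSpecNorm B ≤ 1 ∧ x = (tinner B A).re} =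
      tNucNorm A := by
  classical
  have hub : ∀ B : Tensor n1 n2 N3, tSpecNorm B ≤ 1 → (tinner B A).re ≤ tNucNorm A := by
    intro B hB
    rw [tinner_eq_sum_trace, Complex.re_sum]
    refine Finset.sum_le_sum fun k _ => ?_
    refine trace_re_le_nucNorm _ _ ?_
    have hk : specNormMat (slice B k) ≤ tSpecNorm B := by
      unfold tSpecNorm
      exact le_ciSup (f := fun k => specNormMat (slice B k))
        (Set.Finite.bddAbove (Set.finite_range _)) k
    exact le_trans hk hB
  have hex : ∃ B : Tensor n1 n2 N3, tSpecNorm B ≤ 1 ∧ (tinner B A).re = tNucNorm A := by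
    choose Bk hBk1 hBk2 using fun k : Fin N3 => exists_trace_eq_nucNorm (slice A k)
    refine ⟨fun i j k => Bk k i j, ?_, ?_⟩
    · unfold tSpecNorm
      refine Real.iSup_le (fun k => ?_) zero_le_one
      have hsl : slice (fun i j k => Bk k i j) k = Bk k := rfl
      rw [hsl]
      exact hBk1 k
    · rw [tinner_eq_sum_trace, Complex.re_sum]
      unfold tNucNorm
      refine Finset.sum_congr rfl fun k _ => ?_
      have hsl : slice (fun i j k => Bk k i j) k = Bk k := rfl
      rw [hsl]
      exact hBk2 k
  obtain ⟨B0, hB0, hB0e⟩ := hex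
  apply le_antisymm
  · refine csSup_le ⟨(tinner B0 A).re, ⟨B0, hB0, rfl⟩⟩ ?_
    rintro x ⟨B, hB, rfl⟩
    exact hub B hB
  · exact le_csSup ⟨tNucNorm A, by rintro x ⟨B, hB, rfl⟩; exact hub B hB⟩ ⟨B0, hB0, hB0e.symm⟩


end TC
end

section
/- Let T ∈ ℂ^{N3×n3} have full column rank, T̃ = (T†)^H, let Ω_1, …, Ω_l ⊆ [n1]×[n2]×[n3] with Ω = Ω_1 ∪ ⋯ ∪ Ω_l, let p_1, …, p_l > 0, and let T(X) = U ⋆ S ⋆ V^H be the skinny t-SVD. Define M_0 = U ⋆ V^H, M_i = P_S(T̃ T^H − p_i⁻¹ T̃ S_{Ω_i} T^H)(M_{i−1}) for i = 1, …, l, and Y = Σ_{i=1}^l (p_i⁻¹ T̃ S_{Ω_i} T^H + I − T̃ T^H)(M_{i−1}). Then (T T† − T S_Ω T†)^H Y = 0. -/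
namespace TC

open scoped BigOperators ComplexConjugate
open Matrix

section Aux

lemma mode3_mode3 {n1 n2 a b c : ℕ} (A : Matrix (Fin a) (Fin b) ℂ)
    (B : Matrix (Fin b) (Fin c) ℂ) (Z : Tensor n1 n2 c) :
    mode3 A (mode3 B Z) = mode3 (A * B) Z := by
  funext i j k
  simp only [mode3, Matrix.mul_apply, Finset.mul_sum, Finset.sum_mul]
  rw [Finset.sum_comm]
  exact Finset.sum_congr rfl fun t _ => Finset.sum_congr rfl fun s _ => by ring

lemma mode3_one {n1 n2 a : ℕ} (Z : Tensor n1 n2 a) : mode3 (1 : Matrix (Fin a) (Fin a) ℂ) Z = Z := by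
  funext i j k
  simp [mode3, Matrix.one_apply]

lemma mode3_sum {n1 n2 a b l : ℕ} (A : Matrix (Fin a) (Fin b) ℂ) (f : Fin l → Tensor n1 n2 b) :
    mode3 A (∑ i, f i) = ∑ i, mode3 A (f i) := by
  funext i j k
  simp only [mode3, Finset.sum_apply, Finset.mul_sum]
  rw [Finset.sum_comm]

lemma mode3_add {n1 n2 a b : ℕ} (A : Matrix (Fin a) (Fin b) ℂ) (X Y : Tensor n1 n2 b) :
    mode3 A (X + Y) = mode3 A X + mode3 A Y := by
  funext i j k
  simp [mode3, mul_add, Finset.sum_add_distrib]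

lemma mode3_sub {n1 n2 a b : ℕ} (A : Matrix (Fin a) (Fin b) ℂ) (X Y : Tensor n1 n2 b) :
    mode3 A (X - Y) = mode3 A X - mode3 A Y := by
  funext i j k
  simp [mode3, mul_sub, Finset.sum_sub_distrib]

lemma mode3_smul {n1 n2 a b : ℕ} (A : Matrix (Fin a) (Fin b) ℂ) (r : ℝ) (X : Tensor n1 n2 b) :
    mode3 A (r • X) = r • mode3 A X := by
  funext i j k
  simp only [mode3, Pi.smul_apply, Finset.smul_sum]
  exact Finset.sum_congr rfl fun s _ => by
    simp [Complex.real_smul]; ring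

lemma sampleOp_fix {n1 n2 n3 : ℕ} (Ω Ω' : Finset (Fin n1 × Fin n2 × Fin n3)) (h : Ω' ⊆ Ω)
    (Z : Tensor n1 n2 n3) : sampleOp Ω (sampleOp Ω' Z) = sampleOp Ω' Z := by
  funext i j k
  simp only [sampleOp]
  by_cases h' : (i, j, k) ∈ Ω'
  · simp [h', h h']
  · simp [h']

lemma sampleOp_sum {n1 n2 n3 l : ℕ} (Ω : Finset (Fin n1 × Fin n2 × Fin n3))
    (f : Fin l → Tensor n1 n2 n3) : sampleOp Ω (∑ i, f i) = ∑ i, sampleOp Ω (f i) := by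
  funext i j k
  simp only [sampleOp, Finset.sum_apply]
  split <;> simp

lemma sampleOp_smul {n1 n2 n3 : ℕ} (Ω : Finset (Fin n1 × Fin n2 × Fin n3)) (r : ℝ)
    (Z : Tensor n1 n2 n3) : sampleOp Ω (r • Z) = r • sampleOp Ω Z := by
  funext i j k
  simp only [sampleOp, Pi.smul_apply]
  split <;> simp

open ComplexOrder in
lemma pinv_mul_self {N3 n3 : ℕ} (T : Matrix (Fin N3) (Fin n3) ℂ) (hT : FullColRank T) :
    pinv T * T = 1 := by
  have hker : LinearMap.ker T.mulVecLin = ⊥ := by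
    rw [← Submodule.finrank_eq_zero (R := ℂ)]
    have h1 : T.rank + Module.finrank ℂ (LinearMap.ker T.mulVecLin) = n3 := by
      simpa [Matrix.rank] using LinearMap.finrank_range_add_finrank_ker T.mulVecLin
    have h2 : T.rank = n3 := hT
    omega
  have hker2 : LinearMap.ker (Tᴴ * T).mulVecLin = ⊥ := by
    rw [Matrix.ker_mulVecLin_conjTranspose_mul_self]; exact hker
  have hinj : Function.Injective (Tᴴ * T).mulVec := by
    have := LinearMap.ker_eq_bot.mp hker2
    exact this
  have hunit : IsUnit (Tᴴ * T) := Matrix.mulVec_injective_iff_isUnit.mp hinj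
  have := Matrix.nonsing_inv_mul (Tᴴ * T) ((Matrix.isUnit_iff_isUnit_det _).mp hunit)
  rw [pinv, Matrix.mul_assoc]
  exact this

end Aux

/-- **The constructed certificate satisfies `(T T† − T S_Ω T†)ᴴ Y = 0`** (the adjoint
being `T̃ Tᴴ − T̃ S_Ω Tᴴ` with `T̃ = (T†)ᴴ`). -/
theorem cert_satisfies_inner_product_condition {n1 n2 n3 N3 r l : ℕ}
    (X : Tensor n1 n2 n3) (T : Matrix (Fin N3) (Fin n3) ℂ)
    (U : Tensor n1 r N3) (S : Tensor r r N3) (V : Tensor n2 r N3)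
    (hT : FullColRank T) (hsvd : IsSkinnyTSVD (mode3 T X) r U S V)
    (Ωs : Fin l → Finset (Fin n1 × Fin n2 × Fin n3))
    (Ω : Finset (Fin n1 × Fin n2 × Fin n3)) (hΩ : Ω = Finset.univ.biUnion Ωs)
    (ps : Fin l → ℝ) (hps : ∀ i, 0 < ps i)
    (M : ℕ → Tensor n1 n2 N3) (hM0 : M 0 = tprod U (hconj V))
    (hM : ∀ i : Fin l, M ((i : ℕ) + 1) =
      PS U V (mode3 (pinv T)ᴴ (mode3 Tᴴ (M (i : ℕ))) -
        (ps i)⁻¹ • mode3 (pinv T)ᴴ (sampleOp (Ωs i) (mode3 Tᴴ (M (i : ℕ))))))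
    (Y : Tensor n1 n2 N3)
    (hY : Y = ∑ i : Fin l,
      ((ps i)⁻¹ • mode3 (pinv T)ᴴ (sampleOp (Ωs i) (mode3 Tᴴ (M (i : ℕ))))
        + M (i : ℕ) - mode3 (pinv T)ᴴ (mode3 Tᴴ (M (i : ℕ))))) :
    mode3 (pinv T)ᴴ (mode3 Tᴴ Y) - mode3 (pinv T)ᴴ (sampleOp Ω (mode3 Tᴴ Y)) = 0 := by
  have hTT : Tᴴ * (pinv T)ᴴ = 1 := by
    rw [← Matrix.conjTranspose_mul, pinv_mul_self T hT, Matrix.conjTranspose_one]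
  have key : ∀ W : Tensor n1 n2 n3, mode3 Tᴴ (mode3 (pinv T)ᴴ W) = W := fun W => by
    rw [mode3_mode3, hTT, mode3_one]
  have hZ : mode3 Tᴴ Y = ∑ i : Fin l, (ps i)⁻¹ • sampleOp (Ωs i) (mode3 Tᴴ (M (i : ℕ))) := by
    rw [hY, mode3_sum]
    refine Finset.sum_congr rfl fun i _ => ?_
    rw [mode3_sub, mode3_add, mode3_smul, key, key, add_sub_cancel_right]
  have hfix : sampleOp Ω (mode3 Tᴴ Y) = mode3 Tᴴ Y := by
    rw [hZ, sampleOp_sum]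
    refine Finset.sum_congr rfl fun i _ => ?_
    rw [sampleOp_smul, sampleOp_fix]
    rw [hΩ]
    exact Finset.subset_biUnion_of_mem Ωs (Finset.mem_univ i)
  rw [hfix, sub_self]


end TC
end

section
/- Let X ∈ ℂ^{n1×n2×n3} and T ∈ ℂ^{N3×n3} with full column rank satisfy the tensor incoherence conditions with parameter ν > 0, and let r be the tubal rank of T(X). Then for every index (i, j, k) ∈ [n1]×[n2]×[n3], ‖P_S(T(e_{ijk}))‖_F² ≤ (ν r (n1+n2)/(n1 n2)) · ‖T‖_{1↦2}², where e_{ijk} ∈ ℂ^{n1×n2×n3} is the tensor with a 1 in position (i, j, k) and 0 elsewhere. -/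
namespace TC

open scoped BigOperators ComplexConjugate
open Matrix

/-! ### Auxiliary lemmas -/

section Aux

variable {M : Type*} [AddCommMonoid M]

private lemma sum3_rot {β γ δ : Type*} [Fintype β] [Fintype γ] [Fintype δ]
    (g : β → γ → δ → M) :
    ∑ b, ∑ c, ∑ d, g b c d = ∑ d, ∑ b, ∑ c, g b c d :=
  (Finset.sum_congr rfl fun _ _ => Finset.sum_comm).trans Finset.sum_comm

private lemma sum3_rot' {β γ δ : Type*} [Fintype β] [Fintype γ] [Fintype δ]
    (g : β → γ → δ → M) :
    ∑ b, ∑ c, ∑ d, g b c d = ∑ c, ∑ d, ∑ b, g b c d :=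
  (sum3_rot fun c d b => g b c d).symm

private lemma sum4_cyc {α β γ δ : Type*} [Fintype α] [Fintype β] [Fintype γ] [Fintype δ]
    (f : α → β → γ → δ → M) :
    ∑ a, ∑ b, ∑ c, ∑ d, f a b c d = ∑ d, ∑ b, ∑ c, ∑ a, f a b c d := by
  calc ∑ a, ∑ b, ∑ c, ∑ d, f a b c d
      = ∑ a, ∑ d, ∑ b, ∑ c, f a b c d :=
        Finset.sum_congr rfl fun a _ => sum3_rot _
    _ = ∑ d, ∑ a, ∑ b, ∑ c, f a b c d := Finset.sum_comm
    _ = ∑ d, ∑ b, ∑ c, ∑ a, f a b c d :=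
        Finset.sum_congr rfl fun d _ => sum3_rot' _

private lemma sum4_mid {α β γ δ : Type*} [Fintype α] [Fintype β] [Fintype γ] [Fintype δ]
    (f : α → β → γ → δ → M) :
    ∑ a, ∑ b, ∑ c, ∑ d, f a b c d = ∑ a, ∑ d, ∑ c, ∑ b, f a b c d := by
  refine Finset.sum_congr rfl fun a _ => ?_
  calc ∑ b, ∑ c, ∑ d, f a b c d
      = ∑ d, ∑ b, ∑ c, f a b c d := sum3_rot _
    _ = ∑ d, ∑ c, ∑ b, f a b c d := Finset.sum_congr rfl fun d _ => Finset.sum_comm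

end Aux

lemma tprod_assoc {a b c d n3 : ℕ} (A : Tensor a b n3) (B : Tensor b c n3) (C : Tensor c d n3) :
    tprod (tprod A B) C = tprod A (tprod B C) := by
  funext i j k
  simp only [tprod, Finset.sum_mul, Finset.mul_sum]
  rw [Finset.sum_comm]
  exact Finset.sum_congr rfl fun s _ => Finset.sum_congr rfl fun t _ => by ring

lemma hconj_hconj {n1 n2 n3 : ℕ} (A : Tensor n1 n2 n3) : hconj (hconj A) = A := by
  funext i j k; simp [hconj]

lemma tinner_add_left {n1 n2 n3 : ℕ} (A B C : Tensor n1 n2 n3) :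
    tinner (A + B) C = tinner A C + tinner B C := by
  simp [tinner, Finset.sum_add_distrib, add_mul]

lemma tinner_sub_left {n1 n2 n3 : ℕ} (A B C : Tensor n1 n2 n3) :
    tinner (A - B) C = tinner A C - tinner B C := by
  simp [tinner, Finset.sum_sub_distrib, sub_mul]

lemma tinner_add_right {n1 n2 n3 : ℕ} (A B C : Tensor n1 n2 n3) :
    tinner A (B + C) = tinner A B + tinner A C := by
  simp [tinner, Finset.sum_add_distrib, mul_add]

lemma tinner_sub_right {n1 n2 n3 : ℕ} (A B C : Tensor n1 n2 n3) :
    tinner A (B - C) = tinner A B - tinner A C := by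
  simp [tinner, Finset.sum_sub_distrib, mul_sub]

lemma conj_tinner {n1 n2 n3 : ℕ} (A B : Tensor n1 n2 n3) :
    (starRingEnd ℂ) (tinner A B) = tinner B A := by
  simp only [tinner, map_sum, _root_.map_mul, Complex.conj_conj]
  exact Finset.sum_congr rfl fun i _ => Finset.sum_congr rfl fun j _ =>
    Finset.sum_congr rfl fun k _ => by ring

/-- Adjoint rule for left multiplication. -/
lemma tinner_tprod_left {n1 n2 m n3 : ℕ} (U : Tensor n1 m n3) (A : Tensor m n2 n3)
    (B : Tensor n1 n2 n3) :
    tinner (tprod U A) B = tinner A (tprod (hconj U) B) := by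
  simp only [tinner, tprod, hconj, map_sum, _root_.map_mul, Finset.sum_mul, Finset.mul_sum]
  rw [sum4_cyc]
  exact Finset.sum_congr rfl fun s _ => Finset.sum_congr rfl fun j _ =>
    Finset.sum_congr rfl fun k _ => Finset.sum_congr rfl fun i _ => by ring

/-- Adjoint rule for right multiplication. -/
lemma tinner_tprod_right {n1 n2 m n3 : ℕ} (A : Tensor n1 m n3) (W : Tensor m n2 n3)
    (B : Tensor n1 n2 n3) :
    tinner (tprod A W) B = tinner A (tprod B (hconj W)) := by
  simp only [tinner, tprod, hconj, map_sum, _root_.map_mul, Finset.sum_mul, Finset.mul_sum]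
  rw [sum4_mid]
  exact Finset.sum_congr rfl fun i _ => Finset.sum_congr rfl fun s _ =>
    Finset.sum_congr rfl fun k _ => Finset.sum_congr rfl fun j _ => by ring

/-- Slice-wise orthonormal columns give an isometry on the left. -/
lemma tprod_hconj_self {n1 m n2 n3 : ℕ} (U : Tensor n1 m n3)
    (hU : ∀ k : Fin n3, (slice U k)ᴴ * slice U k = 1) (W : Tensor m n2 n3) :
    tprod (hconj U) (tprod U W) = W := by
  funext a j k
  simp only [tprod, hconj, Finset.mul_sum]
  rw [Finset.sum_comm]
  have : ∀ t, ∑ s, (starRingEnd ℂ) (U s a k) * (U s t k * W t j k)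
      = (if a = t then (1:ℂ) else 0) * W t j k := by
    intro t
    have hent : ((slice U k)ᴴ * slice U k) a t = (1 : Matrix (Fin m) (Fin m) ℂ) a t := by
      rw [hU k]
    simp only [Matrix.mul_apply, Matrix.conjTranspose_apply, slice, Matrix.of_apply,
      Matrix.one_apply] at hent
    calc ∑ s, (starRingEnd ℂ) (U s a k) * (U s t k * W t j k)
        = (∑ s, (starRingEnd ℂ) (U s a k) * U s t k) * W t j k := by
          rw [Finset.sum_mul]; exact Finset.sum_congr rfl fun s _ => by ring
      _ = _ := by simp only [starRingEnd_apply]; rw [hent]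
  rw [Finset.sum_congr rfl fun t _ => this t]
  simp [Finset.sum_ite_eq]

/-- Slice-wise orthonormal columns give an isometry on the right. -/
lemma tprod_self_hconj {n1 m n2 n3 : ℕ} (V : Tensor n2 m n3)
    (hV : ∀ k : Fin n3, (slice V k)ᴴ * slice V k = 1) (W : Tensor n1 m n3) :
    tprod (tprod W (hconj V)) V = W := by
  funext i b k
  simp only [tprod, hconj, Finset.sum_mul]
  rw [Finset.sum_comm]
  have : ∀ t, ∑ s, W i t k * (starRingEnd ℂ) (V s t k) * V s b k
      = W i t k * (if t = b then (1:ℂ) else 0) := by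
    intro t
    have hent : ((slice V k)ᴴ * slice V k) t b = (1 : Matrix (Fin m) (Fin m) ℂ) t b := by
      rw [hV k]
    simp only [Matrix.mul_apply, Matrix.conjTranspose_apply, slice, Matrix.of_apply,
      Matrix.one_apply] at hent
    calc ∑ s, W i t k * (starRingEnd ℂ) (V s t k) * V s b k
        = W i t k * ∑ s, (starRingEnd ℂ) (V s t k) * V s b k := by
          rw [Finset.mul_sum]; exact Finset.sum_congr rfl fun s _ => by ring
      _ = _ := by simp only [starRingEnd_apply]; rw [hent]
  rw [Finset.sum_congr rfl fun t _ => this t]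
  simp [Finset.sum_ite_eq']

lemma frobNorm_sq {n1 n2 n3 : ℕ} (A : Tensor n1 n2 n3) :
    frobNorm A ^ 2 = ∑ i, ∑ j, ∑ k, ‖A i j k‖ ^ 2 := by
  rw [frobNorm, Real.sq_sqrt (by positivity)]

lemma frobNorm_nonneg {n1 n2 n3 : ℕ} (A : Tensor n1 n2 n3) : 0 ≤ frobNorm A :=
  Real.sqrt_nonneg _

lemma tinner_self {n1 n2 n3 : ℕ} (A : Tensor n1 n2 n3) :
    tinner A A = ((frobNorm A ^ 2 : ℝ) : ℂ) := by
  rw [frobNorm_sq, tinner]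
  push_cast
  exact Finset.sum_congr rfl fun i _ => Finset.sum_congr rfl fun j _ =>
    Finset.sum_congr rfl fun k _ => by
      rw [mul_comm, Complex.mul_conj']

/-- Key inequality: `‖P_S Z‖_F² ≤ ‖Uᴴ ⋆ Z‖_F² + ‖Z ⋆ V‖_F²`. -/
lemma PS_frob_sq_le {n1 n2 n3 r : ℕ} (U : Tensor n1 r n3) (V : Tensor n2 r n3)
    (hU : ∀ k : Fin n3, (slice U k)ᴴ * slice U k = 1)
    (hV : ∀ k : Fin n3, (slice V k)ᴴ * slice V k = 1) (Z : Tensor n1 n2 n3) :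
    frobNorm (PS U V Z) ^ 2 ≤ frobNorm (tprod (hconj U) Z) ^ 2 + frobNorm (tprod Z V) ^ 2 := by
  have h1 : ∀ {m : ℕ} (W1 W2 : Tensor r m n3),
      tinner (tprod U W1) (tprod U W2) = tinner W1 W2 := by
    intro m W1 W2; rw [tinner_tprod_left, tprod_hconj_self U hU]
  have h2 : ∀ {m : ℕ} (W1 W2 : Tensor m r n3),
      tinner (tprod W1 (hconj V)) (tprod W2 (hconj V)) = tinner W1 W2 := by
    intro m W1 W2; rw [tinner_tprod_right, hconj_hconj, tprod_self_hconj V hV]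
  have symm_rule : ∀ {p q : ℕ} (X Y : Tensor n1 n2 n3) (W : Tensor p q n3),
      tinner X Y = tinner W W → tinner Y X = tinner W W := by
    intro p q X Y W h
    rw [← conj_tinner X Y, h, conj_tinner]
  have hQe : tprod Z (tprod V (hconj V)) = tprod (tprod Z V) (hconj V) :=
    (tprod_assoc _ _ _).symm
  have hCe : tprod (hconj U) (tprod Z (tprod V (hconj V)))
      = tprod (tprod (hconj U) (tprod Z V)) (hconj V) := by
    rw [hQe, ← tprod_assoc]
  have tCC : tinner (tprod (hconj U) Z)
      (tprod (tprod (hconj U) (tprod Z V)) (hconj V))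
      = tinner (tprod (hconj U) (tprod Z V)) (tprod (hconj U) (tprod Z V)) := by
    calc tinner (tprod (hconj U) Z) (tprod (tprod (hconj U) (tprod Z V)) (hconj V))
        = (starRingEnd ℂ) (tinner (tprod (tprod (hconj U) (tprod Z V)) (hconj V))
            (tprod (hconj U) Z)) := (conj_tinner _ _).symm
      _ = (starRingEnd ℂ) (tinner (tprod (hconj U) (tprod Z V))
            (tprod (tprod (hconj U) Z) V)) := by
          rw [tinner_tprod_right, hconj_hconj]
      _ = (starRingEnd ℂ) (tinner (tprod (hconj U) (tprod Z V))
            (tprod (hconj U) (tprod Z V))) := by rw [tprod_assoc]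
      _ = _ := conj_tinner _ _
  have ePP : tinner (tprod U (tprod (hconj U) Z)) (tprod U (tprod (hconj U) Z))
      = tinner (tprod (hconj U) Z) (tprod (hconj U) Z) := h1 _ _
  have eQQ : tinner (tprod Z (tprod V (hconj V))) (tprod Z (tprod V (hconj V)))
      = tinner (tprod Z V) (tprod Z V) := by
    rw [hQe]; exact h2 _ _
  have eRR : tinner (tprod U (tprod (hconj U) (tprod Z (tprod V (hconj V)))))
        (tprod U (tprod (hconj U) (tprod Z (tprod V (hconj V)))))
      = tinner (tprod (hconj U) (tprod Z V)) (tprod (hconj U) (tprod Z V)) := by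
    rw [hCe, h1]; exact h2 _ _
  have ePQ : tinner (tprod U (tprod (hconj U) Z)) (tprod Z (tprod V (hconj V)))
      = tinner (tprod (hconj U) (tprod Z V)) (tprod (hconj U) (tprod Z V)) := by
    rw [hQe, tinner_tprod_left, ← tprod_assoc]
    exact tCC
  have ePR : tinner (tprod U (tprod (hconj U) Z))
        (tprod U (tprod (hconj U) (tprod Z (tprod V (hconj V)))))
      = tinner (tprod (hconj U) (tprod Z V)) (tprod (hconj U) (tprod Z V)) := by
    rw [hCe, h1]
    exact tCC
  have eQR : tinner (tprod Z (tprod V (hconj V)))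
        (tprod U (tprod (hconj U) (tprod Z (tprod V (hconj V)))))
      = tinner (tprod (hconj U) (tprod Z V)) (tprod (hconj U) (tprod Z V)) := by
    rw [hCe, hQe, ← tprod_assoc, h2]
    calc tinner (tprod Z V) (tprod U (tprod (hconj U) (tprod Z V)))
        = (starRingEnd ℂ) (tinner (tprod U (tprod (hconj U) (tprod Z V)))
            (tprod Z V)) := (conj_tinner _ _).symm
      _ = (starRingEnd ℂ) (tinner (tprod (hconj U) (tprod Z V))
            (tprod (hconj U) (tprod Z V))) := by rw [tinner_tprod_left]
      _ = _ := conj_tinner _ _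
  have eQP := symm_rule _ _ _ ePQ
  have eRP := symm_rule _ _ _ ePR
  have eRQ := symm_rule _ _ _ eQR
  have hexp : tinner (PS U V Z) (PS U V Z)
      = tinner (tprod (hconj U) Z) (tprod (hconj U) Z)
        + tinner (tprod Z V) (tprod Z V)
        - tinner (tprod (hconj U) (tprod Z V)) (tprod (hconj U) (tprod Z V)) := by
    have hps : PS U V Z = tprod U (tprod (hconj U) Z) + tprod Z (tprod V (hconj V))
        - tprod U (tprod (hconj U) (tprod Z (tprod V (hconj V)))) := rfl
    rw [hps]
    simp only [tinner_sub_left, tinner_sub_right, tinner_add_left, tinner_add_right]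
    rw [ePP, eQQ, eRR, ePQ, eQP, ePR, eRP, eQR, eRQ]
    ring
  have hreal : frobNorm (PS U V Z) ^ 2
      = frobNorm (tprod (hconj U) Z) ^ 2 + frobNorm (tprod Z V) ^ 2
        - frobNorm (tprod (hconj U) (tprod Z V)) ^ 2 := by
    have h := hexp
    rw [tinner_self, tinner_self, tinner_self, tinner_self] at h
    exact_mod_cast h
  linarith [sq_nonneg (frobNorm (tprod (hconj U) (tprod Z V)))]

/-! ### Entrywise identification with the incoherence quantities -/

lemma mode3_eBasis {n1 n2 n3 N3 : ℕ} (T : Matrix (Fin N3) (Fin n3) ℂ)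
    (i : Fin n1) (j : Fin n2) (k : Fin n3) (s : Fin n1) (t : Fin n2) (c : Fin N3) :
    mode3 T (eBasis n1 n2 n3 i j k) s t c = if s = i ∧ t = j then T c k else 0 := by
  simp only [mode3, eBasis]
  by_cases h : s = i ∧ t = j
  · obtain ⟨h1, h2⟩ := h
    subst h1; subst h2
    simp [Finset.sum_ite_eq']
  · rw [if_neg h]
    refine Finset.sum_eq_zero fun x _ => ?_
    rw [if_neg (by tauto), mul_zero]

private lemma sum_ite_sq {n2 N3 : ℕ} (j : Fin n2) (f : Fin N3 → ℂ) :
    ∑ j' : Fin n2, ∑ k', ‖(if j' = j then f k' else 0)‖ ^ 2 = ∑ k', ‖f k'‖ ^ 2 := by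
  rw [Finset.sum_comm]
  simp [apply_ite (‖·‖), apply_ite (· ^ 2 : ℝ → ℝ), Finset.sum_ite_eq']

private lemma sum_ite_sq' {n1 m N3 : ℕ} (i : Fin n1) (f : Fin m → Fin N3 → ℂ) :
    ∑ i' : Fin n1, ∑ a, ∑ k', ‖(if i' = i then f a k' else 0)‖ ^ 2
      = ∑ a, ∑ k', ‖f a k'‖ ^ 2 := by
  simp [apply_ite (‖·‖), apply_ite (· ^ 2 : ℝ → ℝ), Finset.sum_ite_irrel,
    Finset.sum_ite_eq']

lemma incoh_entry_U {n1 n3 N3 r : ℕ} (T : Matrix (Fin N3) (Fin n3) ℂ) (U : Tensor n1 r N3)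
    (i : Fin n1) (k : Fin n3) (a : Fin r) (z : Fin 1) (c : Fin N3) :
    tprod (tprod (hconj U) (xiB n1 N3 i)) (mode3 T (zetaB n3 k)) a z c
      = (starRingEnd ℂ) (U i a c) * T c k := by
  simp [tprod, hconj, xiB, zetaB, mode3, mul_ite, Finset.sum_ite_eq']

lemma left_entry {n1 n2 n3 N3 r : ℕ} (T : Matrix (Fin N3) (Fin n3) ℂ) (U : Tensor n1 r N3)
    (i : Fin n1) (j : Fin n2) (k : Fin n3) (a : Fin r) (j' : Fin n2) (c : Fin N3) :
    tprod (hconj U) (mode3 T (eBasis n1 n2 n3 i j k)) a j' c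
      = if j' = j then (starRingEnd ℂ) (U i a c) * T c k else 0 := by
  simp only [tprod, hconj]
  rw [Finset.sum_congr rfl fun s _ => by rw [mode3_eBasis]]
  by_cases h : j' = j
  · subst h
    simp [mul_ite, Finset.sum_ite_eq']
  · simp [h]

lemma right_entry {n1 n2 n3 N3 r : ℕ} (T : Matrix (Fin N3) (Fin n3) ℂ) (V : Tensor n2 r N3)
    (i : Fin n1) (j : Fin n2) (k : Fin n3) (i' : Fin n1) (a : Fin r) (c : Fin N3) :
    tprod (mode3 T (eBasis n1 n2 n3 i j k)) V i' a c
      = if i' = i then T c k * V j a c else 0 := by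
  simp only [tprod]
  rw [Finset.sum_congr rfl fun s _ => by rw [mode3_eBasis]]
  by_cases h : i' = i
  · subst h
    simp [ite_mul, Finset.sum_ite_eq']
  · simp [h]

lemma frob_left_eq {n1 n2 n3 N3 r : ℕ} (T : Matrix (Fin N3) (Fin n3) ℂ) (U : Tensor n1 r N3)
    (i : Fin n1) (j : Fin n2) (k : Fin n3) :
    frobNorm (tprod (hconj U) (mode3 T (eBasis n1 n2 n3 i j k)))
      = frobNorm (tprod (tprod (hconj U) (xiB n1 N3 i)) (mode3 T (zetaB n3 k))) := by
  unfold frobNorm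
  refine congrArg Real.sqrt (Finset.sum_congr rfl fun a _ => ?_)
  calc ∑ j', ∑ c, ‖tprod (hconj U) (mode3 T (eBasis n1 n2 n3 i j k)) a j' c‖ ^ 2
      = ∑ j' : Fin n2, ∑ c, ‖(if j' = j then (starRingEnd ℂ) (U i a c) * T c k else 0)‖ ^ 2 := by
        exact Finset.sum_congr rfl fun j' _ => Finset.sum_congr rfl fun c _ => by
          rw [left_entry]
    _ = ∑ c, ‖(starRingEnd ℂ) (U i a c) * T c k‖ ^ 2 := sum_ite_sq j _
    _ = ∑ z : Fin 1, ∑ c, ‖tprod (tprod (hconj U) (xiB n1 N3 i)) (mode3 T (zetaB n3 k)) a z c‖ ^ 2 := by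
        rw [Fin.sum_univ_one]
        exact Finset.sum_congr rfl fun c _ => by rw [incoh_entry_U]

lemma incoh_entry_V {n2 n3 N3 r : ℕ} (T : Matrix (Fin N3) (Fin n3) ℂ) (V : Tensor n2 r N3)
    (j : Fin n2) (k : Fin n3) (a : Fin r) (z : Fin 1) (c : Fin N3) :
    tprod (tprod (hconj V) (xiB n2 N3 j)) (mode3 T (zetaB n3 k)) a z c
      = (starRingEnd ℂ) (V j a c) * T c k := by
  simp [tprod, hconj, xiB, zetaB, mode3, mul_ite, Finset.sum_ite_eq']

lemma frob_right_eq {n1 n2 n3 N3 r : ℕ} (T : Matrix (Fin N3) (Fin n3) ℂ) (V : Tensor n2 r N3)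
    (i : Fin n1) (j : Fin n2) (k : Fin n3) :
    frobNorm (tprod (mode3 T (eBasis n1 n2 n3 i j k)) V)
      = frobNorm (tprod (tprod (hconj V) (xiB n2 N3 j)) (mode3 T (zetaB n3 k))) := by
  unfold frobNorm
  refine congrArg Real.sqrt ?_
  calc ∑ i', ∑ a, ∑ c, ‖tprod (mode3 T (eBasis n1 n2 n3 i j k)) V i' a c‖ ^ 2
      = ∑ i' : Fin n1, ∑ a : Fin r, ∑ c, ‖(if i' = i then T c k * V j a c else 0)‖ ^ 2 := by
        exact Finset.sum_congr rfl fun i' _ => Finset.sum_congr rfl fun a _ =>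
          Finset.sum_congr rfl fun c _ => by rw [right_entry]
    _ = ∑ a : Fin r, ∑ c, ‖T c k * V j a c‖ ^ 2 := sum_ite_sq' i _
    _ = ∑ a : Fin r, ∑ z : Fin 1, ∑ c, ‖tprod (tprod (hconj V) (xiB n2 N3 j)) (mode3 T (zetaB n3 k)) a z c‖ ^ 2 := by
        refine Finset.sum_congr rfl fun a _ => ?_
        rw [Fin.sum_univ_one]
        refine Finset.sum_congr rfl fun c _ => ?_
        rw [incoh_entry_V, norm_mul, norm_mul, RCLike.norm_conj, mul_comm]

/-- **Frobenius norm bound of `P_S(T(e_{ijk}))` via the incoherence conditions.** -/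
theorem bound_F_norm_by_incoherence {n1 n2 n3 N3 r : ℕ}
    (X : Tensor n1 n2 n3) (T : Matrix (Fin N3) (Fin n3) ℂ)
    (U : Tensor n1 r N3) (S : Tensor r r N3) (V : Tensor n2 r N3) (ν : ℝ)
    (hT : FullColRank T) (hsvd : IsSkinnyTSVD (mode3 T X) r U S V) (hν : 0 < ν)
    (hUT : ∀ (i : Fin n1) (k : Fin n3),
      frobNorm (tprod (tprod (hconj U) (xiB n1 N3 i)) (mode3 T (zetaB n3 k)))
        ≤ Real.sqrt (ν * r / n1) * col2Norm T)
    (hVT : ∀ (j : Fin n2) (k : Fin n3),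
      frobNorm (tprod (tprod (hconj V) (xiB n2 N3 j)) (mode3 T (zetaB n3 k)))
        ≤ Real.sqrt (ν * r / n2) * col2Norm T) :
    ∀ (i : Fin n1) (j : Fin n2) (k : Fin n3),
      frobNorm (PS U V (mode3 T (eBasis n1 n2 n3 i j k))) ^ 2 ≤
        ν * r * ((n1 : ℝ) + n2) / ((n1 : ℝ) * n2) * col2Norm T ^ 2 := by
  intro i j k
  have hn1 : (0:ℝ) < (n1:ℝ) := by exact_mod_cast i.pos
  have hn2 : (0:ℝ) < (n2:ℝ) := by exact_mod_cast j.pos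
  have hC : 0 ≤ col2Norm T := Real.iSup_nonneg fun _ => Real.sqrt_nonneg _
  have hmain := PS_frob_sq_le U V hsvd.U_orth hsvd.V_orth (mode3 T (eBasis n1 n2 n3 i j k))
  have h1 : frobNorm (tprod (hconj U) (mode3 T (eBasis n1 n2 n3 i j k))) ^ 2
      ≤ ν * r / n1 * col2Norm T ^ 2 := by
    rw [frob_left_eq T U i j k]
    calc frobNorm (tprod (tprod (hconj U) (xiB n1 N3 i)) (mode3 T (zetaB n3 k))) ^ 2
        ≤ (Real.sqrt (ν * r / n1) * col2Norm T) ^ 2 :=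
          pow_le_pow_left₀ (frobNorm_nonneg _) (hUT i k) 2
      _ = ν * r / n1 * col2Norm T ^ 2 := by
          rw [mul_pow, Real.sq_sqrt (by positivity)]
  have h2 : frobNorm (tprod (mode3 T (eBasis n1 n2 n3 i j k)) V) ^ 2
      ≤ ν * r / n2 * col2Norm T ^ 2 := by
    rw [frob_right_eq T V i j k]
    calc frobNorm (tprod (tprod (hconj V) (xiB n2 N3 j)) (mode3 T (zetaB n3 k))) ^ 2
        ≤ (Real.sqrt (ν * r / n2) * col2Norm T) ^ 2 :=
          pow_le_pow_left₀ (frobNorm_nonneg _) (hVT j k) 2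
      _ = ν * r / n2 * col2Norm T ^ 2 := by
          rw [mul_pow, Real.sq_sqrt (by positivity)]
  have hx : ν * r / n1 * col2Norm T ^ 2 + ν * r / n2 * col2Norm T ^ 2
      = ν * r * ((n1 : ℝ) + n2) / ((n1 : ℝ) * n2) * col2Norm T ^ 2 := by
    field_simp
    ring
  linarith

end TC
end

section
/- Let T ∈ ℂ^{N3×n3} have full column rank and let U ∈ ℂ^{n1×r×N3}, V ∈ ℂ^{n2×r×N3} be the singular tensors of the skinny t-SVD of T(X) for some X ∈ ℂ^{n1×n2×n3} of tubal rank r in the transform domain. If max_i ‖U^H ⋆ ξ_i‖_F ≤ √(μ r N3 / n1) and max_j ‖V^H ⋆ ξ_j‖_F ≤ √(μ r N3 / n2), then the entrywise bound ‖(U ⋆ V^H) ×₃ T^H‖_∞ ≤ ‖T‖_∞ · μ r (n1+n2) N3 / (2 n1 n2) holds, where ‖T‖_∞ is the entrywise maximum modulus of the matrix T. -/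
namespace TC

open scoped BigOperators ComplexConjugate
open Matrix

private lemma sqrt_mul_sqrt_le {x y : ℝ} (hx : 0 ≤ x) (hy : 0 ≤ y) :
    Real.sqrt x * Real.sqrt y ≤ (x + y) / 2 := by
  rw [← Real.sqrt_mul hx]
  have h : x * y ≤ ((x + y) / 2) ^ 2 := by nlinarith [sq_nonneg (x - y)]
  calc Real.sqrt (x * y) ≤ Real.sqrt (((x + y) / 2) ^ 2) := Real.sqrt_le_sqrt h
    _ = (x + y) / 2 := Real.sqrt_sq (by positivity)

private lemma cs_sum {ι : Type*} [Fintype ι] (f g : ι → ℝ) (hf : ∀ i, 0 ≤ f i) (hg : ∀ i, 0 ≤ g i) :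
    ∑ i, f i * g i ≤ Real.sqrt (∑ i, f i ^ 2) * Real.sqrt (∑ i, g i ^ 2) := by
  have h1 : (0:ℝ) ≤ ∑ i, f i ^ 2 := Finset.sum_nonneg fun i _ => sq_nonneg _
  have h4 : (0:ℝ) ≤ ∑ i, f i * g i := Finset.sum_nonneg fun i _ => mul_nonneg (hf i) (hg i)
  have h3 := Real.sqrt_le_sqrt (Finset.sum_mul_sq_le_sq_mul_sq Finset.univ f g)
  rwa [Real.sqrt_sq h4, Real.sqrt_mul h1] at h3

private lemma frob_hconj_xi {n r N : ℕ} (U : Tensor n r N) (i : Fin n) :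
    frobNorm (tprod (hconj U) (xiB n N i)) = Real.sqrt (∑ t, ∑ k, ‖U i t k‖ ^ 2) := by
  simp [frobNorm, tprod, hconj, xiB, mul_ite]


/-- **Entrywise bound of `Tᴴ(U ⋆ Vᴴ)` via the incoherence conditions.** -/
theorem infNorm_TH_UVH_bound {n1 n2 n3 N3 r : ℕ}
    (X : Tensor n1 n2 n3) (T : Matrix (Fin N3) (Fin n3) ℂ)
    (U : Tensor n1 r N3) (S : Tensor r r N3) (V : Tensor n2 r N3) (μ : ℝ)
    (hT : FullColRank T) (hsvd : IsSkinnyTSVD (mode3 T X) r U S V)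
    (hU : ∀ i : Fin n1,
      frobNorm (tprod (hconj U) (xiB n1 N3 i)) ≤ Real.sqrt (μ * r * N3 / n1))
    (hV : ∀ j : Fin n2,
      frobNorm (tprod (hconj V) (xiB n2 N3 j)) ≤ Real.sqrt (μ * r * N3 / n2)) :
    infNorm (mode3 Tᴴ (tprod U (hconj V))) ≤
      matInfNorm T * (μ * r * ((n1 : ℝ) + n2) * N3 / (2 * ((n1 : ℝ) * n2))) := by
  classical
  set M := matInfNorm T with hMdef
  have hM0 : 0 ≤ M := Real.iSup_nonneg fun i => Real.iSup_nonneg fun j => norm_nonneg _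
  have hMle : ∀ (s : Fin N3) (k : Fin n3), ‖T s k‖ ≤ M := by
    intro s k
    calc ‖T s k‖ ≤ ⨆ j, ‖T s j‖ :=
          le_ciSup (f := fun j => ‖T s j‖) (Set.Finite.bddAbove (Set.finite_range _)) k
      _ ≤ M := le_ciSup (f := fun i => ⨆ j, ‖T i j‖)
          (Set.Finite.bddAbove (Set.finite_range _)) s
  set c : ℝ := μ * r * N3 with hc
  have hrowU : ∀ i, Real.sqrt (∑ t, ∑ k, ‖U i t k‖ ^ 2) ≤ Real.sqrt (c / n1) := by
    intro i; rw [← frob_hconj_xi]; exact hU i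
  have hrowV : ∀ j, Real.sqrt (∑ t, ∑ k, ‖V j t k‖ ^ 2) ≤ Real.sqrt (c / n2) := by
    intro j; rw [← frob_hconj_xi]; exact hV j
  -- entrywise bound
  have key : ∀ (i : Fin n1) (j : Fin n2) (k : Fin n3),
      ‖mode3 Tᴴ (tprod U (hconj V)) i j k‖ ≤ M * (Real.sqrt (c / n1) * Real.sqrt (c / n2)) := by
    intro i j k
    have h1 : ‖mode3 Tᴴ (tprod U (hconj V)) i j k‖
        ≤ M * ∑ p : Fin r × Fin N3, ‖U i p.1 p.2‖ * ‖V j p.1 p.2‖ := by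
      calc ‖mode3 Tᴴ (tprod U (hconj V)) i j k‖
          ≤ ∑ s, ‖Tᴴ k s * tprod U (hconj V) i j s‖ := norm_sum_le _ _
        _ ≤ ∑ s, M * ∑ t, ‖U i t s‖ * ‖V j t s‖ := by
            apply Finset.sum_le_sum
            intro s _
            rw [norm_mul]
            have hin : ‖tprod U (hconj V) i j s‖ ≤ ∑ t, ‖U i t s‖ * ‖V j t s‖ := by
              calc ‖tprod U (hconj V) i j s‖ ≤ ∑ t, ‖U i t s * hconj V t j s‖ :=
                    norm_sum_le _ _
                _ = ∑ t, ‖U i t s‖ * ‖V j t s‖ := by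
                    simp [hconj, norm_mul]
            have hT : ‖Tᴴ k s‖ ≤ M := by
              rw [Matrix.conjTranspose_apply]
              simpa using hMle s k
            exact mul_le_mul hT hin (norm_nonneg _) hM0
        _ = M * ∑ s, ∑ t, ‖U i t s‖ * ‖V j t s‖ := by rw [Finset.mul_sum]
        _ = M * ∑ p : Fin r × Fin N3, ‖U i p.1 p.2‖ * ‖V j p.1 p.2‖ := by
            rw [Fintype.sum_prod_type, Finset.sum_comm]
    have h2 : ∑ p : Fin r × Fin N3, ‖U i p.1 p.2‖ * ‖V j p.1 p.2‖
        ≤ Real.sqrt (c / n1) * Real.sqrt (c / n2) := by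
      calc ∑ p : Fin r × Fin N3, ‖U i p.1 p.2‖ * ‖V j p.1 p.2‖
          ≤ Real.sqrt (∑ p : Fin r × Fin N3, ‖U i p.1 p.2‖ ^ 2)
            * Real.sqrt (∑ p : Fin r × Fin N3, ‖V j p.1 p.2‖ ^ 2) :=
            cs_sum _ _ (fun p => norm_nonneg _) (fun p => norm_nonneg _)
        _ = Real.sqrt (∑ t, ∑ k, ‖U i t k‖ ^ 2) * Real.sqrt (∑ t, ∑ k, ‖V j t k‖ ^ 2) := by
            rw [Fintype.sum_prod_type, Fintype.sum_prod_type]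
        _ ≤ Real.sqrt (c / n1) * Real.sqrt (c / n2) :=
            mul_le_mul (hrowU i) (hrowV j) (Real.sqrt_nonneg _) (Real.sqrt_nonneg _)
    calc ‖mode3 Tᴴ (tprod U (hconj V)) i j k‖
        ≤ M * ∑ p : Fin r × Fin N3, ‖U i p.1 p.2‖ * ‖V j p.1 p.2‖ := h1
      _ ≤ M * (Real.sqrt (c / n1) * Real.sqrt (c / n2)) := by
          apply mul_le_mul_of_nonneg_left h2 hM0
  have hsup : infNorm (mode3 Tᴴ (tprod U (hconj V)))
      ≤ M * (Real.sqrt (c / n1) * Real.sqrt (c / n2)) := by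
    have hb : 0 ≤ M * (Real.sqrt (c / n1) * Real.sqrt (c / n2)) := by positivity
    refine Real.iSup_le (fun i => Real.iSup_le (fun j => Real.iSup_le (fun k => key i j k) hb) hb) hb
  refine hsup.trans ?_
  rcases Nat.eq_zero_or_pos n1 with h1 | h1
  · subst h1; simp
  rcases Nat.eq_zero_or_pos n2 with h2 | h2
  · subst h2; simp
  rcases Nat.eq_zero_or_pos r with h3 | h3
  · subst h3; simp [hc]
  rcases Nat.eq_zero_or_pos N3 with h4 | h4
  · subst h4; simp [hc]
  -- main case: all dims positive
  have hcnn : 0 ≤ c := by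
    by_contra hneg
    push_neg at hneg
    obtain ⟨k0⟩ : Nonempty (Fin N3) := ⟨⟨0, h4⟩⟩
    obtain ⟨t0⟩ : Nonempty (Fin r) := ⟨⟨0, h3⟩⟩
    have horth : ((slice U k0)ᴴ * slice U k0) t0 t0 = (1 : Matrix (Fin r) (Fin r) ℂ) t0 t0 := by
      rw [hsvd.U_orth k0]
    rw [Matrix.mul_apply, Matrix.one_apply_eq] at horth
    have horth2 : ((∑ a, ‖U a t0 k0‖ ^ 2 : ℝ) : ℂ) = 1 := by
      rw [← horth]
      push_cast
      refine Finset.sum_congr rfl fun a _ => ?_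
      simp [Matrix.conjTranspose_apply, slice, Complex.conj_mul']
    have hsum : (∑ a, ‖U a t0 k0‖ ^ 2 : ℝ) = 1 := by exact_mod_cast horth2
    obtain ⟨a, _, ha⟩ : ∃ a ∈ Finset.univ, (‖U a t0 k0‖ ^ 2 : ℝ) ≠ 0 := by
      by_contra hall
      push_neg at hall
      rw [Finset.sum_eq_zero hall] at hsum
      norm_num at hsum
    have hpos : 0 < ∑ t, ∑ k, ‖U a t k‖ ^ 2 := by
      have hle : ‖U a t0 k0‖ ^ 2 ≤ ∑ t, ∑ k, ‖U a t k‖ ^ 2 := by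
        calc ‖U a t0 k0‖ ^ 2 ≤ ∑ k, ‖U a t0 k‖ ^ 2 :=
              Finset.single_le_sum (f := fun k => ‖U a t0 k‖ ^ 2)
                (fun k _ => sq_nonneg _) (Finset.mem_univ k0)
          _ ≤ ∑ t, ∑ k, ‖U a t k‖ ^ 2 :=
              Finset.single_le_sum (f := fun t => ∑ k, ‖U a t k‖ ^ 2)
                (fun t _ => Finset.sum_nonneg fun k _ => sq_nonneg _) (Finset.mem_univ t0)
      have : 0 < ‖U a t0 k0‖ ^ 2 := lt_of_le_of_ne (sq_nonneg _) (Ne.symm ha)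
      linarith
    have h0 : Real.sqrt (c / n1) = 0 := by
      exact Real.sqrt_eq_zero'.mpr
        (div_nonpos_of_nonpos_of_nonneg (le_of_lt hneg) (Nat.cast_nonneg _))
    have := hrowU a
    rw [h0] at this
    exact absurd (Real.sqrt_pos.mpr hpos) (not_lt.mpr this)
  have hn1 : (0:ℝ) < n1 := by exact_mod_cast h1
  have hn2 : (0:ℝ) < n2 := by exact_mod_cast h2
  have hstep : Real.sqrt (c / n1) * Real.sqrt (c / n2) ≤ c / n1 / 2 + c / n2 / 2 := by
    have := sqrt_mul_sqrt_le (div_nonneg hcnn hn1.le) (div_nonneg hcnn hn2.le)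
    linarith
  have heq : c / n1 / 2 + c / n2 / 2 = μ * r * ((n1 : ℝ) + n2) * N3 / (2 * ((n1 : ℝ) * n2)) := by
    rw [hc]; field_simp; ring
  calc M * (Real.sqrt (c / n1) * Real.sqrt (c / n2))
      ≤ M * (c / n1 / 2 + c / n2 / 2) := mul_le_mul_of_nonneg_left hstep hM0
    _ = M * (μ * r * ((n1 : ℝ) + n2) * N3 / (2 * ((n1 : ℝ) * n2))) := by rw [heq]

end TC
end
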